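/- Let J(i) and J(i+1) be the random cumulative productions over a fixed time horizon starting from i and i+1 waiting jobs, driven by the same random event sequence (i.i.d. events, each an Arrival with probability λ/(λ+μ) or a Service with probability μ/(λ+μ)). Then J(i+1) stochastically dominates J(i): for all j, P(J(i+1) > j) ≥ P(J(i) > j). -/

import Mathlib

open scoped ENNReal NNReal

/-- Events in the M/M/1-type production system. -/
inductive Event where
  | arrival : Event
  | service : Event

/-- One transition of the production system on states `(queue, produced)`. -/
def step : ℕ × ℕ → Event → ℕ × ℕ
  | (q, j), Event.arrival => (q + 1, j)
  | (q, j), Event.service => if q = 0 then (q, j) else (q - 1, j + 1)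

/-- Number of completed jobs after applying event word `w` starting from `i` waiting jobs
and `0` completed jobs. -/
def J (i : ℕ) (w : List Event) : ℕ := (w.foldl step (i, 0)).2

/-- PMF of a single event: arrival with probability `p`, service with probability `1 - p`. -/
noncomputable def eventPMF (p : ℝ≥0∞) (hp : p ≤ 1) : PMF Event :=
  (PMF.ofFintype (fun b => cond b p (1 - p)) (by simp [hp])).map (fun b => if b then Event.arrival else Event.service)

/-- PMF of a word of `n` i.i.d. events. -/
noncomputable def iidWord (p : ℝ≥0∞) (hp : p ≤ 1) : ℕ → PMF (List Event)
  | 0 => PMF.pure []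
  | n + 1 => (eventPMF p hp).bind fun e => (iidWord p hp n).map (fun w => e :: w)

/-- Stochastic dominance of cumulative production in the initial queue length: with events
i.i.d., each an arrival with probability `λ/(λ+μ)` and a service with probability `μ/(λ+μ)`,
`P(J(i+1) > j) ≥ P(J(i) > j)` for all `j`. -/

lemma foldl_mono (w : List Event) : ∀ s t : ℕ × ℕ, s.2 ≤ t.2 → s.1 + s.2 ≤ t.1 + t.2 →
    (w.foldl step s).2 ≤ (w.foldl step t).2 ∧
    (w.foldl step s).1 + (w.foldl step s).2 ≤ (w.foldl step t).1 + (w.foldl step t).2 := by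
  induction w with
  | nil => exact fun s t h1 h2 => ⟨h1, h2⟩
  | cons e w ih =>
    rintro ⟨q1, j1⟩ ⟨q2, j2⟩ h1 h2
    simp only [List.foldl_cons]
    apply ih
    all_goals cases e <;> simp [step] at * <;> first | omega | (split_ifs <;> omega)

lemma J_mono (i : ℕ) (w : List Event) : J i w ≤ J (i + 1) w :=
  (foldl_mono w (i, 0) (i + 1, 0) (le_refl 0) (by omega)).1

theorem J_stochastic_dominance (lam mu : ℝ) (hlam : 0 < lam) (hmu : 0 < mu) (n i j : ℕ) :
    (iidWord (ENNReal.ofReal (lam / (lam + mu)))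
        (ENNReal.ofReal_le_one.mpr ((div_le_one (by linarith)).mpr (by linarith))) n).toOuterMeasure
        {w | j < J i w} ≤
      (iidWord (ENNReal.ofReal (lam / (lam + mu)))
        (ENNReal.ofReal_le_one.mpr ((div_le_one (by linarith)).mpr (by linarith))) n).toOuterMeasure
        {w | j < J (i + 1) w} := by
  exact (iidWord _ _ n).toOuterMeasure.mono fun w hw => lt_of_lt_of_le hw (J_mono i w)
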